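/- arXiv:1511.06102 — 2 statements merged into one kernel-verified Lean document; each statement's English description precedes it below -/
import Mathlib

section
/- Let N ∈ {2,3}, let k ≥ 6 be an even integer, let f be a cusp form of weight k for Γ₀(N), and let ε ∈ {1, −1} be such that N^{−k/2}·z^{−k}·f(−1/(Nz)) = ε·f(z) for all z in the upper half-plane (f is an Atkin–Lehner eigenform with eigenvalue ε). Then the coefficients of the restricted even period polynomial of f satisfy N^{m₁−1}·a_{m₁,m₂}(f) = −ε·N^{(k−2)/2}·a_{m₂,m₁}(f) for every pair (m₁,m₂) ∈ oo(k); equivalently, r_f^{ev,0}(y, Nx) = −N^{(k−2)/2}·ε·r_f^{ev,0}(x,y) as polynomials in x and y. -/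
open Complex MeasureTheory CongruenceSubgroup

noncomputable section

/-- Evaluation of a function on the upper half-plane at a complex number,
extended by `0` off the upper half-plane. -/
def fval (f : UpperHalfPlane → ℂ) (z : ℂ) : ℂ :=
  if h : 0 < z.im then f ⟨z, h⟩ else 0

/-- The totally odd index set `oo(k)`: pairs of odd integers `≥ 3` summing to `k`. -/
def oo (k : ℕ) : Finset (ℕ × ℕ) :=
  (Finset.range (k + 1) ×ˢ Finset.range (k + 1)).filter
    (fun p => Odd p.1 ∧ Odd p.2 ∧ 3 ≤ p.1 ∧ 3 ≤ p.2 ∧ p.1 + p.2 = k)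

/-- The coefficient `a_{m₁,m₂}(f) = C(k-2, m₁-1) ⬝ i^{m₁} ⬝ ∫_0^∞ f(it) t^{m₁-1} dt`
of `x^{m₂-1} y^{m₁-1}` in the period polynomial of `f` (it only depends on `m₁` and `k`). -/
def periodCoeff (k : ℕ) (f : UpperHalfPlane → ℂ) (m₁ : ℕ) : ℂ :=
  (Nat.choose (k - 2) (m₁ - 1) : ℂ) * I ^ m₁ *
    ∫ t in Set.Ioi (0 : ℝ), fval f (I * t) * (t : ℂ) ^ (m₁ - 1)

/-- Lemma: the restricted even period polynomial of an Atkin–Lehner eigenform `f` of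
weight `k` and level `Γ₀(N)` (with eigenvalue `ε`), for `N ∈ {2,3}`, satisfies
`N^{m₁-1} a_{m₁,m₂}(f) = -ε N^{(k-2)/2} a_{m₂,m₁}(f)` for all `(m₁,m₂) ∈ oo(k)`,
i.e. `r_f^{ev,0}(y, Nx) = -N^{(k-2)/2} ε r_f^{ev,0}(x,y)`. -/
theorem stmt7 (N : ℕ) (hN : N = 2 ∨ N = 3) (k : ℕ) (hk : 6 ≤ k) (hke : Even k)
    (ε : ℂ) (hε : ε = 1 ∨ ε = -1)
    (f : CuspForm (Gamma0 N) (k : ℤ))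
    (hAL : ∀ z : ℂ, 0 < z.im →
      ((N : ℂ) ^ (k / 2))⁻¹ * z ^ (-(k : ℤ)) * fval f (-1 / ((N : ℂ) * z)) = ε * fval f z) :
    ∀ m ∈ oo k, (N : ℂ) ^ (m.1 - 1) * periodCoeff k f m.1
      = -ε * (N : ℂ) ^ ((k - 2) / 2) * periodCoeff k f m.2 := by
  rintro ⟨m₁, m₂⟩ hm
  simp only [oo, Finset.mem_filter, Finset.mem_product, Finset.mem_range] at hm
  obtain ⟨-, ho1, ho2, h31, h32, hsum⟩ := hm
  obtain ⟨j, hj⟩ := hke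
  obtain ⟨a, rfl⟩ : ∃ a, m₁ = a + 1 := ⟨m₁ - 1, by omega⟩
  obtain ⟨b, rfl⟩ : ∃ b, m₂ = b + 1 := ⟨m₂ - 1, by omega⟩
  have hEa : Even a := by rcases ho1 with ⟨c, hc⟩; exact ⟨c, by omega⟩
  have hk2 : k = a + b + 2 := by omega
  have hNR : (0:ℝ) < N := by rcases hN with h | h <;> simp [h]
  have hNC : (N:ℂ) ≠ 0 := by exact_mod_cast hNR.ne'
  simp only [periodCoeff, Nat.add_sub_cancel]
  set F : ℝ → ℂ := fun s : ℝ => fval f (I * s) * (s:ℂ) ^ b with hF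
  set H : ℝ → ℂ := fun s : ℝ => fval f (I * s) * (s:ℂ) ^ a with hH
  set c : ℂ := ε * I ^ k * (N:ℂ) ^ (k/2) / (N:ℂ) ^ k with hc
  have epow : ∀ w : ℂ, w ^ k = w ^ a * w ^ b * w ^ 2 := fun w => by
    rw [hk2]; ring
  -- Step 1: inversion t ↦ t⁻¹ plus Atkin-Lehner
  have step1 : (∫ t in Set.Ioi (0:ℝ), H t)
      = ∫ x in Set.Ioi (0:ℝ), (c * (N:ℂ)^b) * F ((N:ℝ)⁻¹ * x) := by
    rw [← integral_comp_rpow_Ioi H (p := -1) (by norm_num)]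
    refine setIntegral_congr_fun measurableSet_Ioi fun x hx => ?_
    have hx0 : (0:ℝ) < x := hx
    have hxC : (x:ℂ) ≠ 0 := ofReal_ne_zero.2 hx0.ne'
    have hrw : x ^ (-1:ℝ) = x⁻¹ := Real.rpow_neg_one x
    have hrw2 : x ^ ((-1:ℝ) - 1) = (x^2)⁻¹ := by
      rw [show ((-1:ℝ) - 1) = ((-2:ℤ):ℝ) by norm_num, Real.rpow_intCast, zpow_neg]
      norm_num [zpow_ofNat]
    have him : 0 < (I * (((N:ℝ)⁻¹ * x : ℝ):ℂ)).im := by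
      simp [Complex.mul_im]; positivity
    have h1 := hAL _ him
    have harg : -1 / ((N:ℂ) * (I * (((N:ℝ)⁻¹ * x : ℝ):ℂ))) = I * ((x⁻¹:ℝ):ℂ) := by
      push_cast
      field_simp
      linear_combination (-1:ℂ) * Complex.I_sq
    rw [harg, zpow_neg, zpow_natCast] at h1
    have hz0 : (I * (((N:ℝ)⁻¹ * x : ℝ):ℂ)) ≠ 0 := by
      intro h; rw [h] at him; simp at him
    have hfe : fval f (I * ((x⁻¹:ℝ):ℂ))
        = ε * fval f (I * (((N:ℝ)⁻¹ * x : ℝ):ℂ))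
          * ((N:ℂ)^(k/2) * (I * (((N:ℝ)⁻¹ * x : ℝ):ℂ))^k) := by
      rw [← h1]
      have h2 : ((N:ℂ)^(k/2)) ≠ 0 := pow_ne_zero _ hNC
      have h3 : (I * (((N:ℝ)⁻¹ * x : ℝ):ℂ))^k ≠ 0 := pow_ne_zero _ hz0
      field_simp
    simp only [hH, hF, hrw, hrw2]
    rw [hfe, Complex.real_smul, hc]
    push_cast
    rw [epow I, epow (N:ℂ), epow (I * ((N:ℂ)⁻¹ * (x:ℂ)))]
    have hNC' : ((N:ℝ):ℂ) ≠ 0 := hNC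
    simp only [mul_pow, Complex.I_sq, inv_pow]
    field_simp [hxC, hNC]
    have h1 : (x:ℂ)⁻¹^2 * (x:ℂ)^2 = 1 := by rw [← mul_pow, inv_mul_cancel₀ hxC, one_pow]
    have h2 : (x:ℂ)⁻¹^a * (x:ℂ)^a = 1 := by rw [← mul_pow, inv_mul_cancel₀ hxC, one_pow]
    have h3 : (N:ℂ)⁻¹^2 * (N:ℂ)^2 = 1 := by rw [← mul_pow, inv_mul_cancel₀ hNC, one_pow]
    have h4 : (N:ℂ)⁻¹^a * (N:ℂ)^a = 1 := by rw [← mul_pow, inv_mul_cancel₀ hNC, one_pow]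
    have h5 : (N:ℂ)⁻¹^b * (N:ℂ)^b = 1 := by rw [← mul_pow, inv_mul_cancel₀ hNC, one_pow]
    simp
  -- Step 2: scaling
  have step2 : (∫ x in Set.Ioi (0:ℝ), F ((N:ℝ)⁻¹ * x)) = (N:ℂ) * ∫ s in Set.Ioi (0:ℝ), F s := by
    rw [integral_comp_mul_left_Ioi F 0 (b := (N:ℝ)⁻¹) (by positivity)]
    simp [inv_inv, Complex.real_smul]
  have key : (∫ t in Set.Ioi (0:ℝ), H t)
      = c * (N:ℂ)^b * ((N:ℂ) * ∫ s in Set.Ioi (0:ℝ), F s) := by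
    rw [step1, MeasureTheory.integral_const_mul, step2]
  rw [key]
  -- final algebra
  have hch : ((k-2).choose b : ℂ) = ((k-2).choose a : ℂ) := by
    rw [show b = (k-2) - a by omega]
    rw [Nat.choose_symm (by omega)]
  have hI : I ^ (a+1) * I ^ k = -I ^ (b+1) := by
    rw [← pow_add, show a + 1 + k = 2*(a+1) + (b+1) by omega, pow_add, pow_mul,
      Complex.I_sq, (hEa.add_one).neg_one_pow]
    ring
  have hNpow : (N:ℂ) ^ ((k-2)/2) * (N:ℂ)^a * (N:ℂ)^b * (N:ℂ)^2 = (N:ℂ)^a * (N:ℂ)^(k/2) * (N:ℂ)^b * (N:ℂ) := by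
    rw [← pow_add, ← pow_add, ← pow_add, ← pow_add, ← pow_add, ← pow_succ]
    congr 1
    omega
  rw [hch, hc, epow (N:ℂ)]
  field_simp
  have hK : (N:ℂ)^(k/2) = (N:ℂ) * (N:ℂ)^((k-2)/2) := by
    rw [← pow_succ']; congr 1; omega
  linear_combination ((((k-2).choose a : ℕ) : ℂ) * ε * (∫ s in Set.Ioi (0:ℝ), F s) * (N:ℂ)^(k/2)) * hI + (-((((k-2).choose a : ℕ) : ℂ) * ε * (∫ s in Set.Ioi (0:ℝ), F s) * I^(b+1))) * hK
end
end

section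
/- Let p(x,y) be a polynomial in two variables over ℂ such that every monomial x^a·y^b appearing in p has both exponents a and b even. Then every monomial x^a·y^b appearing in the polynomial p(3x, x+y) − p(3x, x−y) has both exponents a and b odd; equivalently, 2·p(3x, x+y) ≡ p(3x, x+y) + p(3x, x−y) modulo the span of monomials x^{odd}·y^{odd}. Likewise, every monomial appearing in p(x+y, 3y) − p(x−y, 3y) has both exponents odd. -/
open MvPolynomial

noncomputable section

/-- A two-variable polynomial lies in the span of monomials `x^odd ⬝ y^odd`
if every monomial appearing in it has odd degree in each variable. -/
def TotallyOdd (q : MvPolynomial (Fin 2) ℂ) : Prop :=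
  ∀ d ∈ q.support, Odd (d 0) ∧ Odd (d 1)

lemma coeff_scale (c : Fin 2 → ℂ) (q : MvPolynomial (Fin 2) ℂ) (d : Fin 2 →₀ ℕ) :
    coeff d (bind₁ (fun i => C (c i) * X i) q) = (∏ i, c i ^ d i) * coeff d q := by
  have hprod : ∀ e : Fin 2 →₀ ℕ, (∏ i, c i ^ e i) = e.prod fun i k => c i ^ k := by
    intro e
    rw [Finsupp.prod, Finset.prod_subset (Finset.subset_univ e.support)]
    intro x _ hx
    simp [Finsupp.notMem_support_iff.mp hx]
  rw [hprod]
  induction q using MvPolynomial.induction_on' with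
  | monomial d' a =>
    rw [bind₁_monomial]
    simp only [Finsupp.prod, mul_pow, Finset.prod_mul_distrib, ← C_pow, ← map_prod]
    have : (∏ x ∈ d'.support, X x ^ d' x : MvPolynomial (Fin 2) ℂ) = monomial d' 1 := by
      rw [monomial_eq, Finsupp.prod]; simp
    rw [this, ← mul_assoc, ← C_mul, coeff_C_mul, coeff_monomial, coeff_monomial]
    by_cases h : d' = d <;> simp [h, Finsupp.prod, mul_comm]
  | add q r hq hr =>
    simp [coeff_add, hq, hr, mul_add]

lemma scale_fixed (c : Fin 2 → ℂ) (hc : ∀ i, c i = 1 ∨ c i = -1)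
    (p : MvPolynomial (Fin 2) ℂ) (hp : ∀ d ∈ p.support, Even (d 0) ∧ Even (d 1)) :
    bind₁ (fun i => C (c i) * X i) p = p := by
  ext d
  rw [coeff_scale]
  by_cases h : d ∈ p.support
  · have h0 := (hp d h).1
    have h1 := (hp d h).2
    have : ∀ i : Fin 2, c i ^ d i = 1 := by
      intro i
      rcases hc i with h' | h'
      · simp [h']
      · rw [h']
        fin_cases i
        · exact h0.neg_one_pow
        · exact h1.neg_one_pow
    simp [Fin.prod_univ_two, this 0, this 1]
  · simp [MvPolynomial.notMem_support_iff.mp h]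

lemma main_aux (f : Fin 2 → MvPolynomial (Fin 2) ℂ)
    (hneg : ∀ i, bind₁ (fun k => C (-1:ℂ) * X k) (f i) = -(f i))
    (c : Fin 2 → ℂ) (hc : ∀ i, c i = 1 ∨ c i = -1)
    (p : MvPolynomial (Fin 2) ℂ) (hp : ∀ d ∈ p.support, Even (d 0) ∧ Even (d 1)) :
    ∀ d ∈ (bind₁ f p - bind₁ (fun i => bind₁ (fun k => C (c k) * X k) (f i)) p).support,
      Even (d 0 + d 1) ∧ c 0 ^ d 0 * c 1 ^ d 1 ≠ 1 := by
  intro d hd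
  rw [MvPolynomial.mem_support_iff] at hd
  -- second bind equals scale of first
  have key : bind₁ (fun i => bind₁ (fun k => C (c k) * X k) (f i)) p
      = bind₁ (fun k => C (c k) * X k) (bind₁ f p) := by
    rw [bind₁_bind₁]
  -- parity invariance: scaling by (-1,-1) fixes bind₁ f p
  have inv : bind₁ (fun k => C ((fun _ => (-1:ℂ)) k) * X k) (bind₁ f p) = bind₁ f p := by
    rw [bind₁_bind₁]
    have : (fun i => bind₁ (fun k => C (-1:ℂ) * X k) (f i)) = fun i => -(f i) := by
      funext i; exact hneg i
    rw [this]
    have : (fun i => -(f i)) = fun i => bind₁ f (C (-1:ℂ) * X i) := by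
      funext i; simp
    rw [this, ← bind₁_bind₁, scale_fixed (fun _ => (-1:ℂ)) (fun _ => Or.inr rfl) p hp]
  have hcd : coeff d (bind₁ f p) ≠ 0 := by
    intro h0
    apply hd
    rw [coeff_sub, key, coeff_scale, h0, mul_zero, sub_zero]
  constructor
  · -- Even (d 0 + d 1)
    have := congrArg (coeff d) inv
    rw [coeff_scale, Fin.prod_univ_two] at this
    have h1 : ((-1:ℂ)) ^ d 0 * (-1) ^ d 1 = 1 :=
      mul_right_cancel₀ hcd (by rw [this, one_mul])
    rw [← pow_add] at h1
    rw [← neg_one_pow_eq_one_iff_even (R := ℂ) (by norm_num)]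
    exact h1
  · -- c 0 ^ d 0 * c 1 ^ d 1 ≠ 1
    intro h1
    apply hd
    rw [coeff_sub, key, coeff_scale, Fin.prod_univ_two, h1, one_mul, sub_self]

lemma sign_absorb (s : Fin 2 → ℂ) (hs : ∀ i, s i = 1 ∨ s i = -1)
    (f : Fin 2 → MvPolynomial (Fin 2) ℂ)
    (p : MvPolynomial (Fin 2) ℂ) (hp : ∀ d ∈ p.support, Even (d 0) ∧ Even (d 1)) :
    bind₁ (fun i => C (s i) * f i) p = bind₁ f p := by
  have h : (fun i => C (s i) * f i) = fun i => bind₁ f (C (s i) * X i) := by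
    funext i; simp [algebraMap_eq]
  rw [h, ← bind₁_bind₁, scale_fixed s hs p hp]

/-- If every monomial of `p(x,y)` has both exponents even, then every monomial of
`p(3x, x+y) - p(3x, x-y)` has both exponents odd, and likewise for
`p(x+y, 3y) - p(x-y, 3y)`. -/
theorem stmt9 (p : MvPolynomial (Fin 2) ℂ)
    (hp : ∀ d ∈ p.support, Even (d 0) ∧ Even (d 1)) :
    TotallyOdd (bind₁ ![3 * X 0, X 0 + X 1] p - bind₁ ![3 * X 0, X 0 - X 1] p) ∧
    TotallyOdd (bind₁ ![X 0 + X 1, 3 * X 1] p - bind₁ ![X 0 - X 1, 3 * X 1] p) := by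
  have oddconc : ∀ d : Fin 2 →₀ ℕ, Even (d 0 + d 1) → ¬ Even (d 1) →
      Odd (d 0) ∧ Odd (d 1) := by
    intro d h1 h2
    rw [Nat.even_add] at h1
    rw [← Nat.not_even_iff_odd, ← Nat.not_even_iff_odd]
    tauto
  have hcsign : ∀ i : Fin 2, (![1, -1] : Fin 2 → ℂ) i = 1 ∨ (![1, -1] : Fin 2 → ℂ) i = -1 := by
    intro i; fin_cases i <;> simp
  constructor
  · have h := main_aux ![3 * X 0, X 0 + X 1]
      (by intro i; fin_cases i <;> simp [map_ofNat] <;> ring)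
      ![1, -1] hcsign p hp
    have heq : (fun i => bind₁ (fun k => C ((![1,-1] : Fin 2 → ℂ) k) * X k)
        ((![3 * X 0, X 0 + X 1] : Fin 2 → MvPolynomial (Fin 2) ℂ) i))
        = ![3 * X 0, X 0 - X 1] := by
      funext i; fin_cases i <;> simp [map_ofNat] <;> ring
    rw [heq] at h
    intro d hd
    obtain ⟨h1, h2⟩ := h d hd
    simp only [Matrix.cons_val_zero, Matrix.cons_val_one, Matrix.head_cons, one_pow,
      one_mul] at h2
    exact oddconc d h1 (fun he => h2 he.neg_one_pow)
  · have h := main_aux ![X 0 + X 1, 3 * X 1]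
      (by intro i; fin_cases i <;> simp [map_ofNat] <;> ring)
      ![1, -1] hcsign p hp
    have heq : (fun i => bind₁ (fun k => C ((![1,-1] : Fin 2 → ℂ) k) * X k)
        ((![X 0 + X 1, 3 * X 1] : Fin 2 → MvPolynomial (Fin 2) ℂ) i))
        = fun i => C ((![1,-1] : Fin 2 → ℂ) i) *
            ((![X 0 - X 1, 3 * X 1] : Fin 2 → MvPolynomial (Fin 2) ℂ) i) := by
      funext i; fin_cases i <;> simp [map_ofNat] <;> ring
    rw [heq, sign_absorb ![1,-1] hcsign ![X 0 - X 1, 3 * X 1] p hp] at h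
    intro d hd
    obtain ⟨h1, h2⟩ := h d hd
    simp only [Matrix.cons_val_zero, Matrix.cons_val_one, Matrix.head_cons, one_pow,
      one_mul] at h2
    exact oddconc d h1 (fun he => h2 he.neg_one_pow)
end
end
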